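/- Under the recursion x_{w₁,·} = Γ(w₁+β₁/α₁)/Γ(β₁/α₁)·Γ(1+(β₁+1)/α₁)/Γ(w₁+1+(β₁+1)/α₁)·(1-r+β₁)/(β₁(β₁+1)), one has ∑_{w₁=2}^∞ Γ(w₁+β₁/α₁)/Γ(w₁+1+(β₁+1)/α₁) = α₁ · Γ(2+β₁/α₁)/Γ(2+(β₁+1)/α₁). -/

import Mathlib

open Real Filter Topology

/-- Key decay lemma: `Γ(n+a)/Γ(n+b) → 0` when `0 < a < b`. -/
lemma gamma_ratio_tendsto_zero (a b : ℝ) (ha : 0 < a) (hab : a < b) :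
    Tendsto (fun n : ℕ => Real.Gamma ((n : ℝ) + a) / Real.Gamma ((n : ℝ) + b))
      atTop (𝓝 0) := by
  set c : ℝ := min (b - a) (1 / 2) with hc
  have hc0 : 0 < c := lt_min (by linarith) (by norm_num)
  have hc1 : c < 1 := lt_of_le_of_lt (min_le_right _ _) (by norm_num)
  have hcba : c ≤ b - a := min_le_left _ _
  -- squeeze between 0 and (n + a + c - 1) ^ (-c)
  have h1 : Tendsto (fun n : ℕ => ((n : ℝ) + (a + c - 1))) atTop atTop :=
    tendsto_atTop_add_const_right atTop (a + c - 1) tendsto_natCast_atTop_atTop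
  have hlim : Tendsto (fun n : ℕ => ((n : ℝ) + a + c - 1) ^ (-c)) atTop (𝓝 0) := by
    refine ((tendsto_rpow_neg_atTop hc0).comp h1).congr fun n => ?_
    simp only [Function.comp_apply]
    congr 1
    ring
  refine squeeze_zero' ?_ ?_ hlim
  · filter_upwards with n
    have h1 : 0 < Real.Gamma ((n : ℝ) + a) := Real.Gamma_pos_of_pos (by positivity)
    have h2 : 0 < Real.Gamma ((n : ℝ) + b) := Real.Gamma_pos_of_pos (by linarith)
    positivity
  · filter_upwards [eventually_ge_atTop 2] with n hn
    have hn2 : (2 : ℝ) ≤ (n : ℝ) := by exact_mod_cast hn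
    set s : ℝ := (n : ℝ) + a with hs
    have hs0 : 0 < s := by positivity
    have hs1 : 1 < s + c - 1 := by simp only [hs]; linarith
    have hsc : 0 < s + c - 1 := by linarith
    have hsc' : 0 < s + c := by linarith
    -- log-convexity: Γ(s) ≤ Γ(s+c-1)^c * Γ(s+c)^(1-c)
    have key : Real.Gamma s ≤ Real.Gamma (s + c - 1) ^ c * Real.Gamma (s + c) ^ (1 - c) := by
      have := Real.Gamma_mul_add_mul_le_rpow_Gamma_mul_rpow_Gamma
        (s := s + c - 1) (t := s + c) (a := c) (b := 1 - c) hsc hsc' hc0 (by linarith)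
        (by ring)
      convert this using 2
      ring
    -- Γ(s+c-1) = Γ(s+c)/(s+c-1)
    have hrec : Real.Gamma (s + c) = (s + c - 1) * Real.Gamma (s + c - 1) := by
      have h := Real.Gamma_add_one (s := s + c - 1) (by linarith)
      rw [show s + c - 1 + 1 = s + c by ring] at h
      exact h
    have hG1 : 0 < Real.Gamma (s + c - 1) := Real.Gamma_pos_of_pos hsc
    have hG2 : 0 < Real.Gamma (s + c) := Real.Gamma_pos_of_pos hsc'
    have hdiv : Real.Gamma (s + c - 1) = Real.Gamma (s + c) / (s + c - 1) := by
      rw [hrec]; field_simp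
    have key2 : Real.Gamma s ≤ Real.Gamma (s + c) * (s + c - 1) ^ (-c) := by
      calc Real.Gamma s ≤ Real.Gamma (s + c - 1) ^ c * Real.Gamma (s + c) ^ (1 - c) := key
        _ = (Real.Gamma (s + c) / (s + c - 1)) ^ c * Real.Gamma (s + c) ^ (1 - c) := by
            rw [hdiv]
        _ = Real.Gamma (s + c) * (s + c - 1) ^ (-c) := by
            rw [Real.div_rpow hG2.le hsc.le, Real.rpow_neg hsc.le, div_mul_eq_mul_div,
              ← Real.rpow_add hG2]
            rw [show c + (1 - c) = 1 by ring, Real.rpow_one, div_eq_mul_inv]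
    -- monotonicity: Γ(s+c) ≤ Γ(n+b)
    have hmono : Real.Gamma (s + c) ≤ Real.Gamma ((n : ℝ) + b) := by
      rcases eq_or_lt_of_le (show s + c ≤ (n : ℝ) + b by simp only [hs]; linarith) with h | h
      · rw [h]
      · exact le_of_lt (Real.Gamma_strictMonoOn_Ici (by simp only [Set.mem_Ici, hs]; linarith)
          (by simp only [Set.mem_Ici]; linarith) h)
    have hGb : 0 < Real.Gamma ((n : ℝ) + b) := Real.Gamma_pos_of_pos (by linarith)
    have hrp : 0 ≤ (s + c - 1) ^ (-c) := Real.rpow_nonneg hsc.le _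
    have hnum : Real.Gamma s ≤ Real.Gamma ((n : ℝ) + b) * (s + c - 1) ^ (-c) :=
      key2.trans (mul_le_mul_of_nonneg_right hmono hrp)
    calc Real.Gamma s / Real.Gamma ((n : ℝ) + b)
        ≤ Real.Gamma ((n : ℝ) + b) * (s + c - 1) ^ (-c) / Real.Gamma ((n : ℝ) + b) := by
          gcongr
      _ = (s + c - 1) ^ (-c) := by
          rw [mul_comm, mul_div_assoc, div_self hGb.ne', mul_one]
      _ = ((n : ℝ) + a + c - 1) ^ (-c) := by rw [hs]

theorem gamma_tail_sum (α₁ β₁ : ℝ) (hα₁ : 0 < α₁) (hβ₁ : 0 < β₁) :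
    HasSum
      (fun k : ℕ =>
        Real.Gamma (((k + 2 : ℕ) : ℝ) + β₁ / α₁) /
          Real.Gamma (((k + 2 : ℕ) : ℝ) + 1 + (β₁ + 1) / α₁))
      (α₁ * (Real.Gamma (2 + β₁ / α₁) / Real.Gamma (2 + (β₁ + 1) / α₁))) := by
  set a : ℝ := β₁ / α₁ with ha
  set b : ℝ := (β₁ + 1) / α₁ with hb
  have ha0 : 0 < a := div_pos hβ₁ hα₁
  have hb0 : 0 < b := div_pos (by linarith) hα₁
  have hba : b - a = 1 / α₁ := by rw [ha, hb]; field_simp; ring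
  have hab : a < b := by
    have : 0 < b - a := by rw [hba]; positivity
    linarith
  set f : ℕ → ℝ := fun n => Real.Gamma ((n : ℝ) + 2 + a) / Real.Gamma ((n : ℝ) + 2 + b)
    with hf
  set t : ℕ → ℝ := fun k => Real.Gamma (((k + 2 : ℕ) : ℝ) + a) /
      Real.Gamma (((k + 2 : ℕ) : ℝ) + 1 + b) with ht
  have htnonneg : ∀ k, 0 ≤ t k := by
    intro k
    have h1 : 0 < Real.Gamma (((k + 2 : ℕ) : ℝ) + a) :=
      Real.Gamma_pos_of_pos (by positivity)
    have h2 : 0 < Real.Gamma (((k + 2 : ℕ) : ℝ) + 1 + b) :=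
      Real.Gamma_pos_of_pos (by positivity)
    positivity
  -- telescoping identity: t k = α₁ * (f k - f (k+1))
  have hkey : ∀ k : ℕ, t k = α₁ * (f k - f (k + 1)) := by
    intro k
    set x : ℝ := (k : ℝ) + 2 + a with hx
    set y : ℝ := (k : ℝ) + 2 + b with hy
    have hx0 : 0 < x := by positivity
    have hy0 : 0 < y := by positivity
    have hGx : 0 < Real.Gamma x := Real.Gamma_pos_of_pos hx0
    have hGy : 0 < Real.Gamma y := Real.Gamma_pos_of_pos hy0
    have hrx : Real.Gamma (x + 1) = x * Real.Gamma x := Real.Gamma_add_one hx0.ne'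
    have hry : Real.Gamma (y + 1) = y * Real.Gamma y := Real.Gamma_add_one hy0.ne'
    have hfk1 : f (k + 1) = Real.Gamma (x + 1) / Real.Gamma (y + 1) := by
      simp only [hf, hx, hy]
      push_cast
      ring_nf
    have htk : t k = Real.Gamma x / Real.Gamma (y + 1) := by
      simp only [ht, hx, hy]
      push_cast
      ring_nf
    have hfkeq : f k = Real.Gamma x / Real.Gamma y := rfl
    rw [htk, hfk1, hrx, hry, hfkeq]
    have hyx : y - x = 1 / α₁ := by rw [hx, hy]; linarith [hba]
    have h1 : α₁ * (y - x) = 1 := by rw [hyx]; field_simp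
    have h2 : α₁ * (Real.Gamma x / Real.Gamma y - x * Real.Gamma x / (y * Real.Gamma y)) =
        α₁ * (y - x) * (Real.Gamma x / (y * Real.Gamma y)) := by
      field_simp
    rw [h2, h1, one_mul]
  -- limit of f : tends to 0
  have hflim : Tendsto f atTop (𝓝 0) := by
    have := gamma_ratio_tendsto_zero (2 + a) (2 + b) (by linarith) (by linarith)
    apply this.congr
    intro n
    simp only [hf]
    ring_nf
  -- conclude
  rw [hasSum_iff_tendsto_nat_of_nonneg htnonneg]
  have hsum : ∀ n : ℕ, ∑ i ∈ Finset.range n, t i = α₁ * (f 0 - f n) := by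
    intro n
    calc ∑ i ∈ Finset.range n, t i = ∑ i ∈ Finset.range n, α₁ * (f i - f (i + 1)) := by
          exact Finset.sum_congr rfl fun i _ => hkey i
      _ = α₁ * ∑ i ∈ Finset.range n, (f i - f (i + 1)) := by rw [Finset.mul_sum]
      _ = α₁ * (f 0 - f n) := by rw [Finset.sum_range_sub' f n]
  simp only [hsum]
  have h0 : f 0 = Real.Gamma (2 + a) / Real.Gamma (2 + b) := by
    simp only [hf]; norm_num
  have : Tendsto (fun n => α₁ * (f 0 - f n)) atTop (𝓝 (α₁ * (f 0 - 0))) :=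
    (tendsto_const_nhds.sub hflim).const_mul α₁
  simpa [h0] using this
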